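/- arXiv:1401.0914 — 2 statements merged into one kernel-verified Lean document; each statement's English description precedes it below -/
import Mathlib

section
/- Let λ > 0, let G be a Borel probability measure on (0,∞), let H̄ : (0,∞) → [0,1] be measurable, and let m > 1 satisfy m·∫ e^{−λx} H̄(x) dG(x) = 1 and μ∞ := m·∫ H̄(x) dG(x) > 1. Define F_R(s) := 1 − (m/(μ∞ − 1))·∫_{(s,∞)} (1 − e^{λ(s−x)}) H̄(x) dG(x) for s ≥ 0. Then F_R(0) = 0, F_R is nondecreasing, 0 ≤ F_R(s) ≤ 1 for all s ≥ 0, and F_R(s) → 1 as s → ∞; i.e., F_R is the cumulative distribution function of a probability measure on [0,∞). -/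
open MeasureTheory Filter Topology

/-- **The residual time-to-birth distribution is a CDF.** Let `l > 0`, `G` a Borel
probability measure on `(0,∞)`, `H̄ : ℝ → [0,1]` measurable, `m > 1` with
`m·∫ e^{−lx} H̄(x) dG(x) = 1` and `μ∞ := m·∫ H̄(x) dG(x) > 1`.  Define
`F_R(s) := 1 − (m/(μ∞ − 1))·∫_{(s,∞)} (1 − e^{l(s−x)}) H̄(x) dG(x)` for `s ≥ 0`.
Then `F_R(0) = 0`, `F_R` is nondecreasing on `[0,∞)`, `0 ≤ F_R ≤ 1` there, and
`F_R(s) → 1` as `s → ∞`. -/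
theorem residual_time_to_birth_is_cdf
    (l : ℝ) (hl : 0 < l)
    (G : Measure ℝ) [IsProbabilityMeasure G] (hGsupp : G (Set.Iic 0) = 0)
    (Hbar : ℝ → ℝ) (hHm : Measurable Hbar) (hH01 : ∀ x, Hbar x ∈ Set.Icc (0:ℝ) 1)
    (m : ℝ) (hm : 1 < m)
    (hmal : m * ∫ x, Real.exp (-l * x) * Hbar x ∂G = 1)
    (μinf : ℝ) (hμdef : μinf = m * ∫ x, Hbar x ∂G) (hμ : 1 < μinf)
    (F : ℝ → ℝ)
    (hF : ∀ s : ℝ, F s =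
      1 - (m / (μinf - 1)) *
        ∫ x in Set.Ioi s, (1 - Real.exp (l * (s - x))) * Hbar x ∂G) :
    F 0 = 0 ∧ MonotoneOn F (Set.Ici 0) ∧
    (∀ s : ℝ, 0 ≤ s → F s ∈ Set.Icc (0:ℝ) 1) ∧
    Tendsto F atTop (𝓝 1) := by
  have hμ1 : (0:ℝ) < μinf - 1 := by linarith
  have hm0 : (0:ℝ) < m := by linarith
  set c : ℝ := m / (μinf - 1) with hc
  have hcpos : 0 < c := div_pos hm0 hμ1
  set g : ℝ → ℝ → ℝ := fun s x => (1 - Real.exp (l * (s - x))) * Hbar x with hg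
  set I : ℝ → ℝ := fun s => ∫ x in Set.Ioi s, g s x ∂G with hI
  have hFI : ∀ s, F s = 1 - c * I s := fun s => hF s
  have hae : ∀ᵐ x ∂G, 0 < x := by
    rw [ae_iff]
    have : {x : ℝ | ¬ 0 < x} = Set.Iic 0 := by ext x; simp
    rw [this]; exact hGsupp
  -- measurability
  have hgm : ∀ s, Measurable (g s) := by
    intro s
    exact (measurable_const.sub
      (((measurable_const.sub measurable_id).const_mul l).exp)).mul hHm
  -- pointwise bounds on Ioi s
  have hb : ∀ s, ∀ x ∈ Set.Ioi s, 0 ≤ g s x ∧ g s x ≤ 1 := by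
    intro s x hx
    have hx' : s < x := hx
    have hsx : l * (s - x) < 0 := mul_neg_of_pos_of_neg hl (by linarith)
    have he1 : Real.exp (l * (s - x)) ≤ 1 := (Real.exp_lt_one_iff.mpr hsx).le
    have he0 : (0:ℝ) < Real.exp (l * (s - x)) := Real.exp_pos _
    have h0 := (hH01 x).1
    have h1 := (hH01 x).2
    refine ⟨mul_nonneg (by linarith) h0, ?_⟩
    calc g s x ≤ 1 * 1 := mul_le_mul (by linarith) h1 h0 (by norm_num)
      _ = 1 := one_mul 1
  -- integrability on Ioi s
  have hint : ∀ s, IntegrableOn (g s) (Set.Ioi s) G := by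
    intro s
    refine Integrable.mono' (integrable_const 1) (hgm s).aestronglyMeasurable ?_
    filter_upwards [self_mem_ae_restrict (measurableSet_Ioi : MeasurableSet (Set.Ioi s))]
      with x hx
    rw [Real.norm_eq_abs, abs_of_nonneg (hb s x hx).1]
    exact (hb s x hx).2
  -- global integrability of Hbar and exp(-lx)*Hbar
  have hHint : Integrable Hbar G := by
    refine Integrable.mono' (integrable_const 1) hHm.aestronglyMeasurable ?_
    filter_upwards with x
    rw [Real.norm_eq_abs, abs_of_nonneg (hH01 x).1]
    exact (hH01 x).2
  have hEint : Integrable (fun x => Real.exp (-l * x) * Hbar x) G := by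
    refine Integrable.mono' (integrable_const 1)
      (((measurable_id.const_mul (-l)).exp).mul hHm).aestronglyMeasurable ?_
    filter_upwards [hae] with x hx
    have he1 : Real.exp (-l * x) ≤ 1 := by
      apply Real.exp_le_one_iff.mpr
      nlinarith
    have he0 : (0:ℝ) < Real.exp (-l * x) := Real.exp_pos _
    have h0 := (hH01 x).1
    have h1 := (hH01 x).2
    rw [Real.norm_eq_abs, abs_of_nonneg (mul_nonneg he0.le h0)]
    calc Real.exp (-l * x) * Hbar x ≤ 1 * 1 := mul_le_mul he1 h1 h0 (by norm_num)
      _ = 1 := one_mul 1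
  -- value of I at 0
  have hI0 : I 0 = (μinf - 1) / m := by
    have hrestr : G.restrict (Set.Ioi (0:ℝ)) = G :=
      Measure.restrict_eq_self_of_ae_mem (by filter_upwards [hae] with x hx; exact hx)
    have heq : ∀ x : ℝ, g 0 x = Hbar x - Real.exp (-l * x) * Hbar x := by
      intro x
      have : l * ((0:ℝ) - x) = -l * x := by ring
      simp only [hg, this]; ring
    have : I 0 = ∫ x, (Hbar x - Real.exp (-l * x) * Hbar x) ∂G := by
      simp only [hI]
      rw [show (∫ x in Set.Ioi (0:ℝ), g 0 x ∂G) = ∫ x, g 0 x ∂G by rw [hrestr]]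
      exact integral_congr_ae (Filter.Eventually.of_forall heq)
    rw [this, integral_sub hHint hEint]
    have h1 : ∫ x, Hbar x ∂G = μinf / m := by
      rw [eq_div_iff hm0.ne', hμdef]; ring
    have h2 : ∫ x, Real.exp (-l * x) * Hbar x ∂G = 1 / m := by
      rw [eq_div_iff hm0.ne']; linarith [hmal]
    rw [h1, h2]; ring
  have hF0 : F 0 = 0 := by
    rw [hFI 0, hI0, hc]
    field_simp
    ring
  -- monotonicity of I (antitone)
  have hImono : ∀ s t : ℝ, s ≤ t → I t ≤ I s := by
    intro s t hst
    have step1 : ∫ x in Set.Ioi t, g t x ∂G ≤ ∫ x in Set.Ioi t, g s x ∂G := by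
      refine setIntegral_mono_on (hint t) ((hint s).mono_set (Set.Ioi_subset_Ioi hst))
        measurableSet_Ioi ?_
      intro x hx
      have hx' : t < x := hx
      have hexp : Real.exp (l * (s - x)) ≤ Real.exp (l * (t - x)) :=
        Real.exp_le_exp.mpr (by nlinarith)
      exact mul_le_mul_of_nonneg_right (by linarith) (hH01 x).1
    have step2 : ∫ x in Set.Ioi t, g s x ∂G ≤ ∫ x in Set.Ioi s, g s x ∂G := by
      refine setIntegral_mono_set (hint s) ?_
        (HasSubset.Subset.eventuallyLE (Set.Ioi_subset_Ioi hst))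
      filter_upwards [self_mem_ae_restrict (measurableSet_Ioi : MeasurableSet (Set.Ioi s))]
        with x hx
      exact (hb s x hx).1
    exact step1.trans step2
  have hFmono : MonotoneOn F (Set.Ici 0) := by
    intro s _ t _ hst
    rw [hFI s, hFI t]
    have := hImono s t hst
    nlinarith
  -- nonnegativity of I
  have hInonneg : ∀ s, 0 ≤ I s := by
    intro s
    refine setIntegral_nonneg measurableSet_Ioi ?_
    intro x hx
    exact (hb s x hx).1
  have hbound : ∀ s : ℝ, 0 ≤ s → F s ∈ Set.Icc (0:ℝ) 1 := by
    intro s hs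
    constructor
    · rw [← hF0]
      exact hFmono (by simp) (by simpa using hs) hs
    · rw [hFI s]
      nlinarith [hInonneg s, hcpos]
  -- tendsto
  have hIle : ∀ s, I s ≤ (G (Set.Ioi s)).toReal := by
    intro s
    calc I s ≤ ∫ _x in Set.Ioi s, (1:ℝ) ∂G := by
          refine setIntegral_mono_on (hint s)
            ((integrableOn_const_iff (C := (1:ℝ))).mpr (Or.inr (measure_lt_top G _)))
            measurableSet_Ioi ?_
          intro x hx; exact (hb s x hx).2
      _ = (G (Set.Ioi s)).toReal := by simp; rfl
  have hGIoi : ∀ s : ℝ, (G (Set.Ioi s)).toReal = 1 - (G (Set.Iic s)).toReal := by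
    intro s
    rw [show Set.Ioi s = (Set.Iic s)ᶜ by simp,
      prob_compl_eq_one_sub measurableSet_Iic,
      ENNReal.toReal_sub_of_le prob_le_one ENNReal.one_ne_top, ENNReal.toReal_one]
  have hGt : Tendsto (fun s : ℝ => (G (Set.Ioi s)).toReal) atTop (𝓝 0) := by
    have h1 : Tendsto (fun s : ℝ => (G (Set.Iic s)).toReal) atTop (𝓝 1) := by
      have := (ENNReal.tendsto_toReal (a := G Set.univ) (by simp)).comp
        (tendsto_measure_Iic_atTop G)
      simp only [measure_univ, ENNReal.toReal_one] at this; exact this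
    have : Tendsto (fun s : ℝ => 1 - (G (Set.Iic s)).toReal) atTop (𝓝 (1 - 1)) :=
      tendsto_const_nhds.sub h1
    simpa [hGIoi] using this
  have hItend : Tendsto I atTop (𝓝 0) := squeeze_zero hInonneg hIle hGt
  have hFt : Tendsto F atTop (𝓝 1) := by
    have : Tendsto (fun s => 1 - c * I s) atTop (𝓝 (1 - c * 0)) :=
      tendsto_const_nhds.sub (tendsto_const_nhds.mul hItend)
    simp only [mul_zero, sub_zero] at this
    exact this.congr fun s => (hFI s).symm
  exact ⟨hF0, hFmono, hbound, hFt⟩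
end

section
/- Let λ > 0 and let G be a Borel probability measure on (0,∞), and let m > 1 satisfy m·∫ e^{−λx} dG(x) = 1. Define F_R(s) := 1 − (m/(m − 1))·∫_{(s,∞)} (1 − e^{λ(s−x)}) dG(x) for s ≥ 0, and let m* := m·∫ x e^{−λx} dG(x) (which is finite). Then B := ∫₀^∞ F_R(z) e^{−λz} dz = m*/(m − 1). -/
open MeasureTheory Filter Topology

lemma gumbel_aux_exp_interval (l : ℝ) (hl : 0 < l) (a b : ℝ) :
    ∫ z in a..b, Real.exp (-l * z) = (Real.exp (-l * a) - Real.exp (-l * b)) / l := by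
  have hderiv : ∀ z ∈ Set.uIcc a b,
      HasDerivAt (fun z => -Real.exp (-l * z) / l) (Real.exp (-l * z)) z := by
    intro z _
    have h := (((hasDerivAt_id z).const_mul (-l)).exp.neg).div_const l
    convert h using 1
    · rfl
    · rfl
    · rfl
    · field_simp
      rfl
  have hcont : IntervalIntegrable (fun z => Real.exp (-l * z)) volume a b :=
    (Real.continuous_exp.comp (continuous_const.mul continuous_id)).intervalIntegrable a b
  rw [intervalIntegral.integral_eq_sub_of_hasDerivAt hderiv hcont]
  ring

/-- **The constant `B` in the Gumbel shift.** Let `l > 0`, `G` a Borel probability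
measure on `(0,∞)`, `m > 1` with `m·∫ e^{−lx} dG(x) = 1`.  Define
`F_R(s) := 1 − (m/(m−1))·∫_{(s,∞)} (1 − e^{l(s−x)}) dG(x)` for `s ≥ 0` and let
`m* := m·∫ x e^{−lx} dG(x)` (which is finite).  Then
`B := ∫₀^∞ F_R(z) e^{−lz} dz = m*/(m − 1)`. -/
theorem gumbel_shift_constant_B
    (l : ℝ) (hl : 0 < l)
    (G : Measure ℝ) [IsProbabilityMeasure G] (hGsupp : G (Set.Iic 0) = 0)
    (m : ℝ) (hm : 1 < m)
    (hmal : m * ∫ x, Real.exp (-l * x) ∂G = 1)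
    (F : ℝ → ℝ)
    (hF : ∀ s : ℝ, F s =
      1 - (m / (m - 1)) * ∫ x in Set.Ioi s, (1 - Real.exp (l * (s - x))) ∂G)
    (mstar : ℝ) (hmstar : mstar = m * ∫ x, x * Real.exp (-l * x) ∂G) :
    Integrable (fun x => x * Real.exp (-l * x)) G ∧
      (∫ z in Set.Ioi (0:ℝ), F z * Real.exp (-l * z)) = mstar / (m - 1) := by
  have hm0 : (0:ℝ) < m := lt_trans one_pos hm
  have hm1 : m - 1 ≠ 0 := sub_ne_zero.2 (ne_of_gt hm)
  -- a.e. positivity under G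
  have hae : ∀ᵐ x ∂G, 0 < x := by
    rw [ae_iff]
    convert hGsupp using 2
    ext x
    simp [not_lt]
  -- integrability of x * exp(-l x) w.r.t. G
  have hxe : Integrable (fun x => x * Real.exp (-l * x)) G := by
    refine Integrable.mono' (integrable_const (1/l))
      ((measurable_id.mul ((measurable_id.const_mul (-l)).exp)).aestronglyMeasurable) ?_
    filter_upwards [hae] with x hx
    rw [Real.norm_eq_abs, abs_of_nonneg (by positivity)]
    have h1 : l * x + 1 ≤ Real.exp (l * x) := Real.add_one_le_exp _
    have h2 : (0:ℝ) < Real.exp (l * x) := Real.exp_pos _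
    rw [show -l * x = -(l*x) by ring, Real.exp_neg, mul_inv_le_iff₀ h2]
    rw [div_mul_eq_mul_div, le_div_iff₀ hl]
    nlinarith
  -- integrability of exp(-l x) w.r.t. G
  have hee : Integrable (fun x => Real.exp (-l * x)) G := by
    refine Integrable.mono' (integrable_const 1)
      (((measurable_id.const_mul (-l)).exp).aestronglyMeasurable) ?_
    filter_upwards [hae] with x hx
    rw [Real.norm_eq_abs, abs_of_pos (Real.exp_pos _)]
    rw [Real.exp_le_one_iff]
    nlinarith
  refine ⟨hxe, ?_⟩
  -- the product kernel
  set f : ℝ × ℝ → ℝ :=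
    fun p => if p.1 < p.2 then Real.exp (-l * p.1) - Real.exp (-l * p.2) else 0 with hf_def
  have hfmeas : Measurable f := by
    refine Measurable.ite (measurableSet_lt measurable_fst measurable_snd) ?_ measurable_const
    exact ((measurable_fst.const_mul (-l)).exp.sub ((measurable_snd.const_mul (-l)).exp))
  have hfint : Integrable f ((volume.restrict (Set.Ioi 0)).prod G) := by
    refine Integrable.mono'
      ((exp_neg_integrableOn_Ioi 0 hl).mul_prod (integrable_const 1))
      hfmeas.aestronglyMeasurable ?_
    refine Eventually.of_forall fun p => ?_
    rw [Real.norm_eq_abs, mul_one]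
    by_cases h : p.1 < p.2
    · rw [hf_def]
      simp only [if_pos h]
      have h2 : Real.exp (-l * p.2) ≤ Real.exp (-l * p.1) :=
        Real.exp_le_exp.2 (by nlinarith)
      rw [abs_of_nonneg (by linarith)]
      have := Real.exp_pos (-l * p.2)
      linarith
    · rw [hf_def]
      simp only [if_neg h]
      simp [Real.exp_pos, le_of_lt (Real.exp_pos _)]
  -- rewrite the integrand
  have hFz : ∀ z : ℝ, F z * Real.exp (-l * z) =
      Real.exp (-l * z) - (m / (m - 1)) * ∫ x, f (z, x) ∂G := by
    intro z
    rw [hF z, sub_mul, one_mul, mul_assoc]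
    congr 2
    rw [← integral_mul_const]
    have h1 : ∀ x : ℝ, (1 - Real.exp (l * (z - x))) * Real.exp (-l * z)
        = Real.exp (-l * z) - Real.exp (-l * x) := by
      intro x
      rw [sub_mul, one_mul, ← Real.exp_add]
      ring_nf
    rw [integral_congr_ae (Eventually.of_forall h1)]
    have h2 : ∀ x : ℝ, f (z, x)
        = Set.indicator (Set.Ioi z) (fun x => Real.exp (-l * z) - Real.exp (-l * x)) x := by
      intro x
      rw [hf_def, Set.indicator_apply]
      simp [Set.mem_Ioi]
    rw [show (fun x => f (z, x))
        = Set.indicator (Set.Ioi z) (fun x => Real.exp (-l * z) - Real.exp (-l * x))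
        from funext h2] at *
    rw [integral_indicator measurableSet_Ioi]
  -- split the outer integral
  have hint1 : IntegrableOn (fun z : ℝ => Real.exp (-l * z)) (Set.Ioi 0) :=
    exp_neg_integrableOn_Ioi 0 hl
  have hint2 : Integrable (fun z => ∫ x, f (z, x) ∂G) (volume.restrict (Set.Ioi 0)) :=
    hfint.integral_prod_left
  have hsplit : (∫ z in Set.Ioi (0:ℝ), F z * Real.exp (-l * z))
      = (∫ z in Set.Ioi (0:ℝ), Real.exp (-l * z))
        - (m / (m - 1)) * ∫ z in Set.Ioi (0:ℝ), (∫ x, f (z, x) ∂G) := by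
    rw [integral_congr_ae (Eventually.of_forall hFz),
      integral_sub hint1 (hint2.const_mul _), integral_const_mul]
  -- the exponential integral over (0,∞)
  have hA : (∫ z in Set.Ioi (0:ℝ), Real.exp (-l * z)) = 1 / l := by
    have hderiv : ∀ z ∈ Set.Ioi (0:ℝ),
        HasDerivAt (fun z => -Real.exp (-l * z) / l) (Real.exp (-l * z)) z := by
      intro z _
      have h := (((hasDerivAt_id z).const_mul (-l)).exp.neg).div_const l
      convert h using 1
      · rfl
      · rfl
      · rfl
      · field_simp
        rfl
    have htop : Tendsto (fun z => -Real.exp (-l * z) / l) atTop (𝓝 0) := by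
      have h1 : Tendsto (fun z : ℝ => -l * z) atTop atBot :=
        tendsto_id.const_mul_atTop_of_neg (by linarith)
      have h2 := (Real.tendsto_exp_atBot.comp h1).neg.div_const l
      simpa using h2
    have hcont : ContinuousWithinAt (fun z => -Real.exp (-l * z) / l) (Set.Ici 0) 0 :=
      ((Real.continuous_exp.comp (continuous_const.mul continuous_id)).neg.div_const
        l).continuousWithinAt
    rw [MeasureTheory.integral_Ioi_of_hasDerivAt_of_tendsto hcont hderiv hint1 htop,
      mul_zero, Real.exp_zero, zero_sub, neg_div, neg_neg]
  -- Fubini swap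
  have hswap : (∫ z in Set.Ioi (0:ℝ), (∫ x, f (z, x) ∂G))
      = ∫ x, (∫ z in Set.Ioi (0:ℝ), f (z, x)) ∂G := integral_integral_swap hfint
  -- inner integral in z, for x > 0
  have hinner : ∀ x : ℝ, 0 < x →
      (∫ z in Set.Ioi (0:ℝ), f (z, x))
        = (1 - Real.exp (-l * x)) / l - x * Real.exp (-l * x) := by
    intro x hx
    have h1 : ∀ z : ℝ, f (z, x)
        = Set.indicator (Set.Iio x) (fun z => Real.exp (-l * z) - Real.exp (-l * x)) z := by
      intro z
      rw [hf_def, Set.indicator_apply]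
      simp [Set.mem_Iio]
    rw [show (fun z => f (z, x))
        = Set.indicator (Set.Iio x) (fun z => Real.exp (-l * z) - Real.exp (-l * x))
        from funext h1]
    rw [integral_indicator measurableSet_Iio,
      Measure.restrict_restrict measurableSet_Iio, Set.Iio_inter_Ioi,
      ← integral_Ioc_eq_integral_Ioo, ← intervalIntegral.integral_of_le hx.le]
    have hc : IntervalIntegrable (fun z => Real.exp (-l * z)) volume 0 x :=
      (Real.continuous_exp.comp (continuous_const.mul continuous_id)).intervalIntegrable 0 x
    rw [intervalIntegral.integral_sub hc (intervalIntegrable_const),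
      gumbel_aux_exp_interval l hl 0 x, intervalIntegral.integral_const]
    simp only [mul_zero, neg_zero, Real.exp_zero, sub_zero, smul_eq_mul]
  -- conclude
  have houter : (∫ x, (∫ z in Set.Ioi (0:ℝ), f (z, x)) ∂G)
      = (1 - ∫ x, Real.exp (-l * x) ∂G) / l - ∫ x, x * Real.exp (-l * x) ∂G := by
    have h1 : (∫ x, (∫ z in Set.Ioi (0:ℝ), f (z, x)) ∂G)
        = ∫ x, ((1 - Real.exp (-l * x)) / l - x * Real.exp (-l * x)) ∂G := by
      refine integral_congr_ae ?_
      filter_upwards [hae] with x hx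
      exact hinner x hx
    have hIa : Integrable (fun x => (1 - Real.exp (-l * x)) / l) G :=
      ((integrable_const (1:ℝ)).sub hee).div_const l
    rw [h1, integral_sub hIa hxe, integral_div,
      integral_sub (integrable_const 1) hee, integral_const]
    simp
  have hIe : (∫ x, Real.exp (-l * x) ∂G) = 1 / m := by
    rw [eq_div_iff (ne_of_gt hm0)]
    linarith [hmal]
  rw [hsplit, hA, hswap, houter, hIe, hmstar]
  field_simp
  ring
end
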